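/- Let c ∈ ℝ, σ > 0, B ≥ 0, and let X be distributed according to the Gaussian measure on ℝ with mean c and variance σ². Then E[e^{−B·max(X,0)²}] = e^{−Bc²/(2σ²B + 1)}/√(2σ²B + 1) · Φ( c/(σ·√(2σ²B + 1)) ) + Φ(−c/σ), where Φ is the standard normal cumulative distribution function. -/

import Mathlib

open MeasureTheory ProbabilityTheory Real Set

/-- The standard normal cumulative distribution function. -/
noncomputable def stdGaussCDF (t : ℝ) : ℝ :=
  ∫ s in Set.Iic t, Real.exp (-s ^ 2 / 2) / Real.sqrt (2 * Real.pi)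

lemma stdGaussCDF_eq_pdf01 (t : ℝ) :
    stdGaussCDF t = ∫ s in Iic t, gaussianPDFReal 0 1 s := by
  unfold stdGaussCDF
  refine setIntegral_congr_fun measurableSet_Iic fun s _ => ?_
  simp [gaussianPDFReal, div_eq_mul_inv, mul_comm]

lemma gaussianReal_eq_map (m τ : ℝ) (hτ : 0 < τ) :
    gaussianReal m ⟨τ^2, sq_nonneg τ⟩ = (gaussianReal 0 1).map (fun x => τ * x + m) := by
  have h1 := gaussianReal_map_const_mul (μ := 0) (v := 1) τ
  have h2 := gaussianReal_map_add_const (μ := τ * 0) (v := ⟨τ^2, sq_nonneg τ⟩ * 1) m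
  symm
  calc (gaussianReal 0 1).map (fun x => τ * x + m)
      = ((gaussianReal 0 1).map (fun x => τ * x)).map (fun x => x + m) := by
        exact (Measure.map_map (measurable_add_const m) (measurable_const_mul τ)).symm
    _ = gaussianReal m ⟨τ^2, sq_nonneg τ⟩ := by
        rw [h1]
        convert h2 using 2
        · rfl
        · rw [mul_zero, zero_add]
          exact congrArg (gaussianReal m) (mul_one (⟨τ^2, sq_nonneg τ⟩ : NNReal)).symm

lemma gaussianReal_Iic_toReal (m τ a : ℝ) (hτ : 0 < τ) :
    ((gaussianReal m ⟨τ^2, sq_nonneg τ⟩) (Iic a)).toReal = stdGaussCDF ((a - m)/τ) := by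
  rw [gaussianReal_eq_map m τ hτ,
    Measure.map_apply ((measurable_const_mul τ).add_const m) measurableSet_Iic]
  have hpre : (fun x => τ * x + m) ⁻¹' Iic a = Iic ((a - m)/τ) := by
    ext x
    simp only [mem_preimage, mem_Iic]
    rw [le_div_iff₀ hτ]
    constructor <;> intro h <;> nlinarith
  rw [hpre, gaussianReal_apply_eq_integral 0 one_ne_zero,
    ENNReal.toReal_ofReal (integral_nonneg fun s => gaussianPDFReal_nonneg 0 1 s),
    stdGaussCDF_eq_pdf01]

lemma stdGaussCDF_neg (t : ℝ) : stdGaussCDF (-t) = 1 - stdGaussCDF t := by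
  have hint := integrable_gaussianPDFReal 0 1
  have htot : (∫ s, gaussianPDFReal 0 1 s) = 1 := integral_gaussianPDFReal_eq_one 0 one_ne_zero
  have hsplit : (∫ s in Iic t, gaussianPDFReal 0 1 s) + (∫ s in Ioi t, gaussianPDFReal 0 1 s)
      = 1 := by
    rw [← htot]
    exact intervalIntegral.integral_Iic_add_Ioi hint.integrableOn hint.integrableOn
  have heven : (∫ s in Ioi t, gaussianPDFReal 0 1 s) = stdGaussCDF (-t) := by
    rw [stdGaussCDF_eq_pdf01, ← integral_comp_neg_Ioi]
    refine setIntegral_congr_fun measurableSet_Ioi fun s _ => ?_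
    simp only [gaussianPDFReal]
    ring_nf
  rw [← stdGaussCDF_eq_pdf01 t] at hsplit
  linarith [heven ▸ hsplit]

/-- For `X ~ N(c, σ²)` and `B ≥ 0`,
`E[e^{-B max(X,0)²}] = e^{-Bc²/(2σ²B+1)}/√(2σ²B+1) · Φ(c/(σ√(2σ²B+1))) + Φ(-c/σ)`. -/
theorem gaussian_exp_neg_sq_plus_moment (c σ B : ℝ) (hσ : 0 < σ) (hB : 0 ≤ B) :
    (∫ x, Real.exp (-B * max x 0 ^ 2) ∂(gaussianReal c ⟨σ ^ 2, sq_nonneg σ⟩)) =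
      Real.exp (-B * c ^ 2 / (2 * σ ^ 2 * B + 1)) / Real.sqrt (2 * σ ^ 2 * B + 1) *
          stdGaussCDF (c / (σ * Real.sqrt (2 * σ ^ 2 * B + 1))) +
        stdGaussCDF (-c / σ) := by
  set μ := gaussianReal c ⟨σ ^ 2, sq_nonneg σ⟩ with hμ
  set k : ℝ := 2 * σ ^ 2 * B + 1 with hkdef
  have hk : 0 < k := by positivity
  have hsk : 0 < Real.sqrt k := Real.sqrt_pos.mpr hk
  have hsk2 : Real.sqrt k ^ 2 = k := Real.sq_sqrt hk.le
  set τ : ℝ := σ / Real.sqrt k with hτdef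
  have hτ : 0 < τ := div_pos hσ hsk
  have hτ2 : τ ^ 2 = σ ^ 2 / k := by rw [hτdef, div_pow, hsk2]
  have hv : (⟨σ ^ 2, sq_nonneg σ⟩ : NNReal) ≠ 0 :=
    fun h => (pow_pos hσ 2).ne' (congrArg NNReal.toReal h)
  have hvk : (⟨τ ^ 2, sq_nonneg τ⟩ : NNReal) ≠ 0 :=
    fun h => (pow_pos hτ 2).ne' (congrArg NNReal.toReal h)
  have hcont : Continuous fun x : ℝ => Real.exp (-B * max x 0 ^ 2) := by fun_prop
  haveI : IsProbabilityMeasure μ := by rw [hμ]; exact instIsProbabilityMeasureGaussianReal c _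
  have hint : Integrable (fun x => Real.exp (-B * max x 0 ^ 2)) μ := by
    refine (integrable_const (1 : ℝ)).mono' hcont.aestronglyMeasurable (ae_of_all _ fun x => ?_)
    rw [Real.norm_eq_abs, abs_of_pos (Real.exp_pos _)]
    exact Real.exp_le_one_iff.mpr (by nlinarith [sq_nonneg (max x 0)])
  rw [← intervalIntegral.integral_Iic_add_Ioi (b := 0) hint.integrableOn hint.integrableOn]
  have hIic : (∫ x in Iic 0, Real.exp (-B * max x 0 ^ 2) ∂μ) = stdGaussCDF (-c / σ) := by
    have h1 : ∀ x ∈ Iic (0:ℝ), Real.exp (-B * max x 0 ^ 2) = 1 := fun x hx => by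
      rw [max_eq_right hx]; simp
    rw [setIntegral_congr_fun measurableSet_Iic h1, setIntegral_const, smul_eq_mul, mul_one,
      hμ, measureReal_def, gaussianReal_Iic_toReal c σ 0 hσ, zero_sub, neg_div]
  have key : ∀ x : ℝ, gaussianPDFReal c ⟨σ ^ 2, sq_nonneg σ⟩ x * Real.exp (-B * x ^ 2)
      = Real.exp (-B * c ^ 2 / k) / Real.sqrt k
          * gaussianPDFReal (c / k) ⟨τ ^ 2, sq_nonneg τ⟩ x := by
    intro x
    have hcoef : (Real.sqrt (2 * π * τ ^ 2))⁻¹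
        = Real.sqrt k * (Real.sqrt (2 * π * σ ^ 2))⁻¹ := by
      rw [hτ2, show 2 * π * (σ ^ 2 / k) = (2 * π * σ ^ 2) / k by ring,
        Real.sqrt_div (by positivity), inv_div, div_eq_mul_inv]
    have hexp : -(x - c) ^ 2 / (2 * σ ^ 2) + -B * x ^ 2
        = -B * c ^ 2 / k + -(x - c / k) ^ 2 / (2 * τ ^ 2) := by
      rw [hτ2]
      simp only [hkdef]
      field_simp
      ring
    simp only [gaussianPDFReal, NNReal.coe_mk]
    show (√(2 * π * σ^2))⁻¹ * rexp (-(x - c) ^ 2 / (2 * σ^2)) * rexp (-B * x ^ 2) = rexp (-B * c ^ 2 / k) / √k * ((√(2 * π * τ^2))⁻¹ * rexp (-(x - c / k) ^ 2 / (2 * τ^2)))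
    rw [hcoef, mul_assoc, ← Real.exp_add, hexp, Real.exp_add]
    field_simp
  have hIoi : (∫ x in Ioi 0, Real.exp (-B * max x 0 ^ 2) ∂μ)
      = Real.exp (-B * c ^ 2 / k) / Real.sqrt k * stdGaussCDF (c / (σ * Real.sqrt k)) := by
    have h1 : (∫ x in Ioi 0, Real.exp (-B * max x 0 ^ 2) ∂μ)
        = ∫ x in Ioi 0, Real.exp (-B * x ^ 2) ∂μ :=
      setIntegral_congr_fun measurableSet_Ioi fun x hx => by rw [max_eq_left (le_of_lt hx)]
    have h2 : (∫ x in Ioi 0, Real.exp (-B * x ^ 2) ∂μ)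
        = ∫ x in Ioi 0, gaussianPDFReal c ⟨σ ^ 2, sq_nonneg σ⟩ x * Real.exp (-B * x ^ 2) := by
      rw [hμ, gaussianReal_of_var_ne_zero c hv]
      have hd : gaussianPDF c ⟨σ ^ 2, sq_nonneg σ⟩
          = fun x => ((Real.toNNReal (gaussianPDFReal c ⟨σ ^ 2, sq_nonneg σ⟩ x) : NNReal)
            : ENNReal) := rfl
      rw [hd]
      refine (setIntegral_withDensity_eq_setIntegral_smul
        ((measurable_gaussianPDFReal _ _).real_toNNReal) _ measurableSet_Ioi).trans ?_
      refine setIntegral_congr_fun measurableSet_Ioi fun x _ => ?_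
      rw [NNReal.smul_def, Real.coe_toNNReal (gaussianPDFReal c ⟨σ ^ 2, sq_nonneg σ⟩ x) (gaussianPDFReal_nonneg _ _ _), smul_eq_mul]
    have h5 : (∫ x in Ioi 0, gaussianPDFReal (c / k) ⟨τ ^ 2, sq_nonneg τ⟩ x)
        = stdGaussCDF (c / (σ * Real.sqrt k)) := by
      have hpint := integrable_gaussianPDFReal (c / k) (⟨τ ^ 2, sq_nonneg τ⟩ : NNReal)
      have ha : (∫ x in Iic 0, gaussianPDFReal (c / k) ⟨τ ^ 2, sq_nonneg τ⟩ x)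
          + (∫ x in Ioi 0, gaussianPDFReal (c / k) ⟨τ ^ 2, sq_nonneg τ⟩ x) = 1 := by
        rw [← integral_gaussianPDFReal_eq_one (c / k) hvk]
        exact intervalIntegral.integral_Iic_add_Ioi hpint.integrableOn hpint.integrableOn
      have hb : (∫ x in Iic 0, gaussianPDFReal (c / k) ⟨τ ^ 2, sq_nonneg τ⟩ x)
          = stdGaussCDF ((0 - c / k) / τ) := by
        have h := gaussianReal_Iic_toReal (c / k) τ 0 hτ
        rwa [gaussianReal_apply_eq_integral _ hvk, ENNReal.toReal_ofReal
          (integral_nonneg fun s => gaussianPDFReal_nonneg (c / k) ⟨τ ^ 2, sq_nonneg τ⟩ s)] at h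
      have harg : (0 - c / k) / τ = -(c / (σ * Real.sqrt k)) := by
        rw [zero_sub, hτdef]
        field_simp
        linear_combination (-c) * hsk2
      rw [harg, stdGaussCDF_neg] at hb
      linarith
    rw [h1, h2, setIntegral_congr_fun measurableSet_Ioi fun x _ => key x, integral_const_mul, h5]
  rw [hIic, hIoi]
  ring
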